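/- arXiv:1101.0289 — 3 statements merged into one kernel-verified Lean document; each statement's English description precedes it below -/
import Mathlib

section
/- Let D be a finite set, k a positive integer, and X ⊆ D^k a subset invariant under the action of S_k permuting coordinates (symmetric). For τ ∈ S_k, let X_τ be the set of tuples in X whose coordinates are constant on each cycle of τ; |X_τ| depends only on the cycle type of τ. Then the number of elements of X with pairwise distinct coordinates equals Σ_{(c_1,…,c_k): Σ i·c_i = k} (−1)^{k − Σ c_i} · N(c_1,…,c_k) · |X_τ|, where the sum is over cycle types, τ is any permutation of type (c_1,…,c_k), and N(c_1,…,c_k) is the number of permutations in S_k of that type. -/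
/-- The full cycle type of a permutation of `Fin k`: the multiset of lengths of all its
disjoint cycles, including fixed points as cycles of length one. -/
def fullCycleType {k : ℕ} (τ : Equiv.Perm (Fin k)) : Multiset ℕ :=
  τ.cycleType + Multiset.replicate (Finset.univ.filter fun i => τ i = i).card 1

section Aux

variable {k : ℕ}

lemma fullCycleType_sum (τ : Equiv.Perm (Fin k)) : (fullCycleType τ).sum = k := by
  unfold fullCycleType
  rw [Multiset.sum_add, Multiset.sum_replicate, smul_eq_mul, mul_one,
    Equiv.Perm.sum_cycleType]
  have : τ.support = Finset.univ.filter fun i => ¬ τ i = i := by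
    ext i; simp [Equiv.Perm.mem_support]
  rw [this]
  rw [add_comm, Finset.card_filter_add_card_filter_not]
  simp

lemma fullCycleType_pos (τ : Equiv.Perm (Fin k)) {n : ℕ} (hn : n ∈ fullCycleType τ) :
    0 < n := by
  unfold fullCycleType at hn
  rw [Multiset.mem_add] at hn
  rcases hn with h | h
  · exact lt_of_lt_of_le (by norm_num) (Equiv.Perm.two_le_of_mem_cycleType h)
  · rw [Multiset.eq_of_mem_replicate h]; norm_num

/-- The partition of `k` determined by the full cycle type of a permutation. -/
def permPartition (τ : Equiv.Perm (Fin k)) : Nat.Partition k where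
  parts := fullCycleType τ
  parts_pos := fullCycleType_pos τ
  parts_sum := fullCycleType_sum τ

lemma cycleType_eq_of_fullCycleType_eq {τ σ : Equiv.Perm (Fin k)}
    (h : fullCycleType τ = fullCycleType σ) : τ.cycleType = σ.cycleType := by
  have key : ∀ ρ : Equiv.Perm (Fin k),
      (fullCycleType ρ).filter (fun n => 2 ≤ n) = ρ.cycleType := by
    intro ρ
    unfold fullCycleType
    rw [Multiset.filter_add, Multiset.filter_eq_self.2 (fun a ha =>
      Equiv.Perm.two_le_of_mem_cycleType ha)]
    have : (Multiset.replicate (Finset.univ.filter fun i => ρ i = i).card 1).filter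
        (fun n => 2 ≤ n) = 0 := by
      rw [Multiset.filter_eq_nil]
      intro a ha
      rw [Multiset.eq_of_mem_replicate ha]
      omega
    rw [this, add_zero]
  rw [← key τ, ← key σ, h]

lemma sign_eq_fullCycleType (τ : Equiv.Perm (Fin k)) :
    (Equiv.Perm.sign τ : ℤ) = (-1 : ℤ) ^ (k - Multiset.card (fullCycleType τ)) := by
  have hsum : τ.cycleType.sum = τ.support.card := Equiv.Perm.sum_cycleType τ
  have hsupp : τ.support.card + (Finset.univ.filter fun i => τ i = i).card = k := by
    have : τ.support = Finset.univ.filter fun i => ¬ τ i = i := by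
      ext i; simp [Equiv.Perm.mem_support]
    rw [this, add_comm, Finset.card_filter_add_card_filter_not]
    simp
  have hcard : Multiset.card (fullCycleType τ)
      = Multiset.card τ.cycleType + (Finset.univ.filter fun i => τ i = i).card := by
    unfold fullCycleType; simp
  have hle : Multiset.card τ.cycleType ≤ τ.cycleType.sum := by
    have := Multiset.card_nsmul_le_sum (s := τ.cycleType) (a := 1)
      (fun x hx => le_trans (by norm_num : (1:ℕ) ≤ 2) (Equiv.Perm.two_le_of_mem_cycleType hx))
    simpa using this
  obtain ⟨m, hm⟩ : ∃ m, τ.cycleType.sum = Multiset.card τ.cycleType + m :=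
    ⟨τ.cycleType.sum - Multiset.card τ.cycleType, by omega⟩
  have hexp : k - Multiset.card (fullCycleType τ) = m := by omega
  rw [hexp]
  have := Equiv.Perm.sign_of_cycleType τ
  have h2 : (Equiv.Perm.sign τ : ℤ) = (-1 : ℤ) ^ (τ.cycleType.sum + Multiset.card τ.cycleType) := by
    rw [this]; push_cast; ring
  rw [h2, hm]
  have : Multiset.card τ.cycleType + m + Multiset.card τ.cycleType
      = 2 * Multiset.card τ.cycleType + m := by ring
  rw [this, pow_add, pow_mul]
  norm_num

end Aux

theorem li_wan_sieve_symmetric {D : Type*} [Fintype D] [DecidableEq D] {k : ℕ}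
    (hk : 0 < k) (X : Finset (Fin k → D))
    (hsym : ∀ (σ : Equiv.Perm (Fin k)) (x : Fin k → D), x ∈ X → x ∘ σ ∈ X)
    (T : Nat.Partition k → Equiv.Perm (Fin k))
    (hT : ∀ P, fullCycleType (T P) = P.parts) :
    ((X.filter fun x => Function.Injective x).card : ℤ)
      = ∑ P : Nat.Partition k,
          (-1 : ℤ) ^ (k - Multiset.card P.parts) *
            ((Finset.univ.filter
                fun τ : Equiv.Perm (Fin k) => fullCycleType τ = P.parts).card : ℤ) *
            ((X.filter fun x => ∀ i, x (T P i) = x i).card : ℤ) := by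
  classical
  -- `|X_τ|` depends only on the cycle type of `τ`.
  have card_conj : ∀ τ σ : Equiv.Perm (Fin k), τ.cycleType = σ.cycleType →
      (X.filter fun x => ∀ i, x (τ i) = x i).card
        = (X.filter fun x => ∀ i, x (σ i) = x i).card := by
    intro τ σ hct
    obtain ⟨c, hc⟩ := isConj_iff.1 (Equiv.Perm.isConj_of_cycleType_eq hct)
    refine Finset.card_bij' (fun x _ => x ∘ ⇑(c⁻¹)) (fun y _ => y ∘ ⇑c) ?_ ?_ ?_ ?_
    · intro x hx
      rw [Finset.mem_filter] at hx ⊢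
      refine ⟨hsym c⁻¹ x hx.1, fun i => ?_⟩
      have hci : c⁻¹ (σ i) = τ (c⁻¹ i) := by
        have : c⁻¹ * σ = τ * c⁻¹ := by
          rw [← hc]; group
        calc c⁻¹ (σ i) = (c⁻¹ * σ) i := rfl
          _ = (τ * c⁻¹) i := by rw [this]
          _ = τ (c⁻¹ i) := rfl
      simp only [Function.comp_apply, hci]
      exact hx.2 (c⁻¹ i)
    · intro y hy
      rw [Finset.mem_filter] at hy ⊢
      refine ⟨hsym c y hy.1, fun i => ?_⟩
      have hci : c (τ i) = σ (c i) := by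
        have : c * τ = σ * c := by
          rw [← hc]; group
        calc c (τ i) = (c * τ) i := rfl
          _ = (σ * c) i := by rw [this]
          _ = σ (c i) := rfl
      simp only [Function.comp_apply, hci]
      exact hy.2 (c i)
    · intro x _; funext i; simp
    · intro y _; funext i; simp
  -- the signed sum over the stabilizer of `x`
  have stab_sum : ∀ x : Fin k → D,
      (∑ τ ∈ Finset.univ.filter (fun τ : Equiv.Perm (Fin k) => ∀ i, x (τ i) = x i),
        (Equiv.Perm.sign τ : ℤ)) = if Function.Injective x then 1 else 0 := by
    intro x
    by_cases hinj : Function.Injective x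
    · rw [if_pos hinj]
      have : Finset.univ.filter (fun τ : Equiv.Perm (Fin k) => ∀ i, x (τ i) = x i)
          = {1} := by
        ext τ
        simp only [Finset.mem_filter, Finset.mem_univ, true_and, Finset.mem_singleton]
        constructor
        · intro h; exact Equiv.ext fun i => hinj (h i)
        · rintro rfl; simp
      rw [this]; simp
    · rw [if_neg hinj]
      rw [Function.not_injective_iff] at hinj
      obtain ⟨i, j, hxij, hij⟩ := hinj
      have hswap : ∀ m, x (Equiv.swap i j m) = x m := by
        intro m
        rcases eq_or_ne m i with rfl | hmi
        · rw [Equiv.swap_apply_left, ← hxij]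
        · rcases eq_or_ne m j with rfl | hmj
          · rw [Equiv.swap_apply_right, hxij]
          · rw [Equiv.swap_apply_of_ne_of_ne hmi hmj]
      refine Finset.sum_involution (fun τ _ => Equiv.swap i j * τ) ?_ ?_ ?_ ?_
      · intro τ _
        rw [map_mul]
        rw [Equiv.Perm.sign_swap hij]
        push_cast; ring
      · intro τ _ _
        intro h
        have h2 : Equiv.swap i j * τ = 1 * τ := by rw [h, one_mul]
        exact hij (Equiv.swap_eq_one_iff.1 (mul_right_cancel h2))
      · intro τ hτ
        rw [Finset.mem_filter] at hτ ⊢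
        refine ⟨Finset.mem_univ _, fun m => ?_⟩
        calc x ((Equiv.swap i j * τ) m) = x (Equiv.swap i j (τ m)) := rfl
          _ = x (τ m) := hswap (τ m)
          _ = x m := hτ.2 m
      · intro τ _
        show Equiv.swap i j * (Equiv.swap i j * τ) = τ
        rw [← mul_assoc, Equiv.swap_mul_self, one_mul]
  -- main computation
  have main : (∑ τ : Equiv.Perm (Fin k),
      (Equiv.Perm.sign τ : ℤ) * ((X.filter fun x => ∀ i, x (τ i) = x i).card : ℤ))
      = ((X.filter fun x => Function.Injective x).card : ℤ) := by
    have step1 : ∀ τ : Equiv.Perm (Fin k),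
        (Equiv.Perm.sign τ : ℤ) * ((X.filter fun x => ∀ i, x (τ i) = x i).card : ℤ)
        = ∑ x ∈ X, (if (∀ i, x (τ i) = x i) then (Equiv.Perm.sign τ : ℤ) else 0) := by
      intro τ
      rw [← Finset.sum_filter, Finset.sum_const, nsmul_eq_mul, mul_comm]
    simp_rw [step1]
    rw [Finset.sum_comm]
    have step2 : ∀ x : Fin k → D,
        (∑ τ : Equiv.Perm (Fin k), if (∀ i, x (τ i) = x i) then (Equiv.Perm.sign τ : ℤ) else 0)
        = if Function.Injective x then 1 else 0 := by
      intro x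
      rw [← Finset.sum_filter]
      exact stab_sum x
    simp_rw [step2]
    rw [← Finset.sum_filter, Finset.sum_const, nsmul_eq_mul, mul_one]
  rw [← main]
  -- fiber the sum over `S_k` by the full cycle type
  rw [← Finset.sum_fiberwise (Finset.univ : Finset (Equiv.Perm (Fin k)))
    (fun τ => permPartition τ)
    (fun τ => (Equiv.Perm.sign τ : ℤ) * ((X.filter fun x => ∀ i, x (τ i) = x i).card : ℤ))]
  refine Finset.sum_congr rfl fun P _ => ?_
  have hfib : Finset.univ.filter (fun τ : Equiv.Perm (Fin k) => permPartition τ = P)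
      = Finset.univ.filter (fun τ : Equiv.Perm (Fin k) => fullCycleType τ = P.parts) := by
    ext τ
    simp only [Finset.mem_filter, Finset.mem_univ, true_and]
    constructor
    · intro h; rw [← h]; rfl
    · intro h; exact Nat.Partition.ext h
  rw [hfib]
  have hconst : ∀ τ ∈ Finset.univ.filter
      (fun τ : Equiv.Perm (Fin k) => fullCycleType τ = P.parts),
      (Equiv.Perm.sign τ : ℤ) * ((X.filter fun x => ∀ i, x (τ i) = x i).card : ℤ)
        = (-1 : ℤ) ^ (k - Multiset.card P.parts)
          * ((X.filter fun x => ∀ i, x (T P i) = x i).card : ℤ) := by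
    intro τ hτ
    rw [Finset.mem_filter] at hτ
    have h1 : (Equiv.Perm.sign τ : ℤ) = (-1 : ℤ) ^ (k - Multiset.card P.parts) := by
      rw [sign_eq_fullCycleType, hτ.2]
    have h2 : (X.filter fun x => ∀ i, x (τ i) = x i).card
        = (X.filter fun x => ∀ i, x (T P i) = x i).card := by
      apply card_conj
      apply cycleType_eq_of_fullCycleType_eq
      rw [hτ.2, hT P]
    rw [h1, h2]
  rw [Finset.sum_congr rfl hconst, Finset.sum_const, nsmul_eq_mul]
  ring
end

section
/- Let s, d, k, q be positive integers with q ≥ s and d | (q − s). Set t_i = q when d | i and t_i = s when d ∤ i, for 1 ≤ i ≤ k. Then C_k(t_1,…,t_k) ≤ (s + k + (q−s)/d − 1)_k, where (t)_k = t(t−1)⋯(t−k+1) is the falling factorial. -/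
/-- `NType k c` is the number `k!/(1^{c₁}c₁!·2^{c₂}c₂!⋯k^{c_k}c_k!)` of permutations
in `S_k` having exactly `c i` cycles of length `i` (the division is exact). -/
def NType (k : ℕ) (c : ℕ → ℕ) : ℕ :=
  Nat.factorial k /
    ∏ i ∈ Finset.range k, ((i + 1) ^ c (i + 1) * Nat.factorial (c (i + 1)))


open Finset

lemma aux_succ_dvd_choose (i c : ℕ) (hi : 0 < i) : (c + 1) ∣ (i * c + i).choose i := by
  obtain ⟨j, rfl⟩ : ∃ j, i = j + 1 := ⟨i - 1, by omega⟩
  have h := Nat.add_one_mul_choose_eq ((j + 1) * c + j) j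
  have hn : (j + 1) * c + j + 1 = (j + 1) * c + (j + 1) := by omega
  rw [hn] at h
  refine ⟨((j + 1) * c + j).choose j, ?_⟩
  have : ((j + 1) * c + (j + 1)).choose (j + 1) * (j + 1)
      = ((c + 1) * (((j + 1) * c + j).choose j)) * (j + 1) := by
    rw [← h]; ring
  exact Nat.eq_of_mul_eq_mul_right (by omega) this

lemma aux_pow_factorial_dvd (i c : ℕ) (hi : 0 < i) :
    i ^ c * c.factorial ∣ (i * c).factorial := by
  induction c with
  | zero => simp
  | succ c ih =>
    have key : (i * c).factorial * i.factorial ∣ (i * (c + 1)).factorial := by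
      have := Nat.factorial_mul_factorial_dvd_factorial_add (i * c) i
      rwa [show i * c + i = i * (c + 1) by ring] at this
    have hchoose : ((i * c + i).choose i) * i.factorial * (i * c).factorial
        = (i * c + i).factorial := by
      have := Nat.choose_mul_factorial_mul_factorial (Nat.le_add_left i (i * c))
      rwa [Nat.add_sub_cancel] at this
    obtain ⟨X, hX⟩ := aux_succ_dvd_choose i c hi
    calc i ^ (c + 1) * (c + 1).factorial
        = (c + 1) * i * (i ^ c * c.factorial) := by
          rw [Nat.factorial_succ]; ring
      _ ∣ (c + 1) * i.factorial * (i * c).factorial := by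
          apply Nat.mul_dvd_mul
          · exact Nat.mul_dvd_mul_left _ (Nat.dvd_factorial hi le_rfl)
          · exact ih
      _ ∣ (i * (c + 1)).factorial := by
          refine ⟨X, ?_⟩
          rw [show i * (c + 1) = i * c + i by ring, ← hchoose, hX]; ring

lemma aux_prod_dvd (s : Finset ℕ) (f : ℕ → ℕ) (hs : ∀ i ∈ s, 0 < i) :
    (∏ i ∈ s, i ^ f i * (f i).factorial) ∣ (∑ i ∈ s, i * f i).factorial := by
  classical
  induction s using Finset.induction with
  | empty => simp
  | @insert a s ha ih =>
    rw [Finset.prod_insert ha, Finset.sum_insert ha]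
    calc a ^ f a * (f a).factorial * ∏ i ∈ s, i ^ f i * (f i).factorial
        ∣ (a * f a).factorial * (∑ i ∈ s, i * f i).factorial := by
          apply Nat.mul_dvd_mul
          · exact aux_pow_factorial_dvd a (f a) (hs a (Finset.mem_insert_self a s))
          · exact ih (fun i hi => hs i (Finset.mem_insert_of_mem hi))
      _ ∣ (a * f a + ∑ i ∈ s, i * f i).factorial :=
          Nat.factorial_mul_factorial_dvd_factorial_add _ _

/-- `Dm M = M.prod * ∏ (count i)!`. -/
def Dm (M : Multiset ℕ) : ℕ := M.prod * ∏ i ∈ M.toFinset, (M.count i).factorial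

lemma Dm_pos {M : Multiset ℕ} (h : ∀ x ∈ M, 0 < x) : 0 < Dm M := by
  apply Nat.mul_pos
  · exact Multiset.prod_pos h
  · exact Finset.prod_pos (fun i _ => Nat.factorial_pos _)

lemma Dm_eq (M : Multiset ℕ) : Dm M = ∏ i ∈ M.toFinset, (i ^ M.count i * (M.count i).factorial) := by
  rw [Dm, Finset.prod_mul_distrib, Finset.prod_multiset_count]

lemma Dm_dvd {M : Multiset ℕ} (h : ∀ x ∈ M, 0 < x) : Dm M ∣ (M.sum).factorial := by
  rw [Dm_eq]
  have hsum : M.sum = ∑ i ∈ M.toFinset, i * M.count i := by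
    rw [Finset.sum_multiset_count]
    exact Finset.sum_congr rfl (fun i _ => by rw [smul_eq_mul, Nat.mul_comm])
  rw [hsum]
  exact aux_prod_dvd _ _ (fun i hi => h i (Multiset.mem_toFinset.mp hi))

lemma Dm_cons (i : ℕ) (M : Multiset ℕ) : Dm (i ::ₘ M) = (i * (M.count i + 1)) * Dm M := by
  classical
  rw [Dm, Dm, Multiset.prod_cons]
  have htf : (i ::ₘ M).toFinset = insert i M.toFinset := by
    simp [Multiset.toFinset_cons]
  rw [htf]
  by_cases hi : i ∈ M.toFinset
  · rw [Finset.insert_eq_self.mpr hi]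
    rw [← Finset.mul_prod_erase _ (fun j => ((i ::ₘ M).count j).factorial) hi]
    have hc : (i ::ₘ M).count i = M.count i + 1 := by simp
    have hrest : ∏ j ∈ M.toFinset.erase i, ((i ::ₘ M).count j).factorial
        = ∏ j ∈ M.toFinset.erase i, (M.count j).factorial := by
      apply Finset.prod_congr rfl
      intro j hj
      rw [Multiset.count_cons_of_ne (Finset.ne_of_mem_erase hj)]
    rw [hc, hrest, Nat.factorial_succ, ← Finset.mul_prod_erase _ (fun j => (M.count j).factorial) hi]
    ring
  · have hc0 : M.count i = 0 := by
      simpa [Multiset.count_eq_zero] using (fun hmem => hi (Multiset.mem_toFinset.mpr hmem))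
    rw [Finset.prod_insert hi]
    have hc : (i ::ₘ M).count i = 1 := by simp [hc0]
    have hrest : ∏ j ∈ M.toFinset, ((i ::ₘ M).count j).factorial
        = ∏ j ∈ M.toFinset, (M.count j).factorial := by
      apply Finset.prod_congr rfl
      intro j hj
      rcases eq_or_ne j i with rfl | hne
      · exact absurd hj hi
      · rw [Multiset.count_cons_of_ne hne]
    rw [hc, hrest, hc0]
    simp [Nat.factorial_one]
    ring

lemma parts_le {k : ℕ} (P : k.Partition) {x : ℕ} (hx : x ∈ P.parts) : x ≤ k := by
  have h := Multiset.cons_erase hx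
  have h2 : P.parts.sum = x + (P.parts.erase x).sum := by rw [← Multiset.sum_cons, h]
  have h3 := P.parts_sum
  omega

lemma parts_count_eq_zero {k : ℕ} (P : k.Partition) {x : ℕ} (hx : x ∉ Finset.Icc 1 k) :
    P.parts.count x = 0 := by
  rw [Multiset.count_eq_zero]
  intro hmem
  exact hx (Finset.mem_Icc.mpr ⟨P.parts_pos hmem, parts_le P hmem⟩)

lemma sum_Icc_count {k : ℕ} (P : k.Partition) :
    ∑ i ∈ Finset.Icc 1 k, i * P.parts.count i = k := by
  classical
  have hsub : P.parts.toFinset ⊆ Finset.Icc 1 k := by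
    intro x hx
    have hx' := Multiset.mem_toFinset.mp hx
    exact Finset.mem_Icc.mpr ⟨P.parts_pos hx', parts_le P hx'⟩
  rw [← Finset.sum_subset hsub (fun x _ hx => by
    rw [Multiset.count_eq_zero.mpr (fun h => hx (Multiset.mem_toFinset.mpr h)), Nat.mul_zero])]
  have := Finset.sum_multiset_count P.parts
  rw [P.parts_sum] at this
  exact (Finset.sum_congr rfl (fun x _ => by rw [smul_eq_mul, Nat.mul_comm])).trans this.symm


/-- weighted partition sum: `h_n = ∑_{P ⊢ n} (∏ t over parts) / Dm(parts)`. -/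
noncomputable def hQ (t : ℕ → ℚ) (n : ℕ) : ℚ :=
  ∑ P : n.Partition, ((P.parts.map t).prod / (Dm P.parts : ℚ))

lemma hQ_zero (t : ℕ → ℚ) : hQ t 0 = 1 := by
  classical
  have hparts : ∀ P : Nat.Partition 0, P.parts = 0 := by
    intro P
    rw [Multiset.eq_zero_iff_forall_notMem]
    intro x hx
    have h1 := P.parts_pos hx
    have h2 := parts_le P hx
    omega
  haveI : Unique (Nat.Partition 0) :=
    { default := ⟨0, fun h => absurd h (Multiset.notMem_zero _), rfl⟩
      uniq := fun P => Nat.Partition.ext (hparts P) }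
  rw [hQ, Finset.univ_unique, Finset.sum_singleton, hparts]
  simp [Dm]

lemma hQ_nonneg (t : ℕ → ℚ) (ht : ∀ i, 0 ≤ t i) (n : ℕ) : 0 ≤ hQ t n := by
  apply Finset.sum_nonneg
  intro P _
  apply div_nonneg
  · exact Multiset.prod_nonneg (by
      intro x hx
      obtain ⟨y, _, rfl⟩ := Multiset.mem_map.mp hx
      exact ht y)
  · exact_mod_cast Nat.zero_le _

lemma hQ_rec (t : ℕ → ℚ) (k : ℕ) :
    (k : ℚ) * hQ t k = ∑ i ∈ Finset.Icc 1 k, t i * hQ t (k - i) := by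
  classical
  rw [hQ, Finset.mul_sum]
  have step1 : ∀ P : k.Partition, (k:ℚ) * ((P.parts.map t).prod / (Dm P.parts : ℚ))
      = ∑ i ∈ Finset.Icc 1 k, (i * P.parts.count i : ℕ) *
          ((P.parts.map t).prod / (Dm P.parts : ℚ)) := by
    intro P
    rw [← Finset.sum_mul]
    congr 1
    rw [← Nat.cast_sum]
    exact_mod_cast congrArg (Nat.cast (R := ℚ)) (sum_Icc_count P).symm
  rw [Finset.sum_congr rfl (fun P _ => step1 P), Finset.sum_comm]
  refine Finset.sum_congr rfl (fun i hi => ?_)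
  obtain ⟨hi1, hik⟩ := Finset.mem_Icc.mp hi
  -- restrict to partitions containing i
  rw [← Finset.sum_subset (Finset.filter_subset (fun P : k.Partition => i ∈ P.parts) Finset.univ)
      (fun P _ hP => by
        have : P.parts.count i = 0 := Multiset.count_eq_zero.mpr
          (by simpa using (Finset.mem_filter.not.mp hP))
        rw [this]
        simp)]
  rw [hQ, Finset.mul_sum]
  have hpos : ∀ (P' : (k - i).Partition) {x : ℕ}, x ∈ i ::ₘ P'.parts → 0 < x := by
    intro P' x hx
    rcases Multiset.mem_cons.mp hx with rfl | h'
    · omega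
    · exact P'.parts_pos h'
  have hsum : ∀ (P' : (k - i).Partition), (i ::ₘ P'.parts).sum = k := by
    intro P'
    rw [Multiset.sum_cons, P'.parts_sum]
    omega
  refine (Finset.sum_bij'
    (fun (P' : (k - i).Partition) (_ : P' ∈ Finset.univ) =>
      (⟨i ::ₘ P'.parts, hpos P', hsum P'⟩ : k.Partition))
    (fun (P : k.Partition) (hP : P ∈ Finset.filter (fun P => i ∈ P.parts) Finset.univ) =>
      (⟨P.parts.erase i,
        fun hx => P.parts_pos (Multiset.mem_of_mem_erase hx),
        by
          have hmem : i ∈ P.parts := (Finset.mem_filter.mp hP).2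
          have hce := Multiset.cons_erase hmem
          have : P.parts.sum = i + (P.parts.erase i).sum := by
            rw [← Multiset.sum_cons, hce]
          have h2 := P.parts_sum
          omega⟩ : (k - i).Partition))
    ?_ ?_ ?_ ?_ ?_).symm
  · intro P' _
    simp only [Finset.mem_filter, Finset.mem_univ, true_and]
    exact Multiset.mem_cons_self i P'.parts
  · intro P hP
    exact Finset.mem_univ _
  · intro P' _
    apply Nat.Partition.ext
    simp [Multiset.erase_cons_head]
  · intro P hP
    apply Nat.Partition.ext
    exact Multiset.cons_erase (Finset.mem_filter.mp hP).2
  · intro P' _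
    simp only
    have hcount : Multiset.count i (i ::ₘ P'.parts) = P'.parts.count i + 1 := by
      simp
    have hW : (Multiset.map t (i ::ₘ P'.parts)).prod = t i * (Multiset.map t P'.parts).prod := by
      rw [Multiset.map_cons, Multiset.prod_cons]
    have hD : Dm (i ::ₘ P'.parts) = (i * (P'.parts.count i + 1)) * Dm P'.parts := Dm_cons i _
    rw [hcount, hW, hD]
    have hD'pos : (0 : ℚ) < (Dm P'.parts : ℚ) := by
      exact_mod_cast Dm_pos (fun x hx => P'.parts_pos hx)
    have hA : ((i * (P'.parts.count i + 1) : ℕ) : ℚ) ≠ 0 := by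
      have : 0 < i * (P'.parts.count i + 1) := by positivity
      exact_mod_cast this.ne'
    push_cast
    push_cast at hA
    field_simp

/-- `rQ a n = C(a-1+n, n)`, the coefficient of `x^n` in `(1-x)^{-a}`. -/
def rQ (a n : ℕ) : ℚ := (Nat.choose (a - 1 + n) n : ℚ)

lemma rQ_zero (a : ℕ) : rQ a 0 = 1 := by simp [rQ]

lemma rQ_pos (a n : ℕ) : 0 < rQ a n := by
  rw [rQ]
  have : 0 < Nat.choose (a - 1 + n) n := Nat.choose_pos (Nat.le_add_left n (a-1))
  exact_mod_cast this

lemma rQ_mono (a : ℕ) : Monotone (rQ a) := by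
  apply monotone_nat_of_le_succ
  intro n
  rw [rQ, rQ]
  have h : Nat.choose (a - 1 + n) n ≤ Nat.choose (a - 1 + (n+1)) (n+1) := by
    rw [show a - 1 + (n+1) = (a - 1 + n) + 1 by omega, Nat.choose_succ_succ]
    omega
  exact_mod_cast h

lemma choose_symm' (a j : ℕ) : (a - 1 + j).choose j = (a - 1 + j).choose (a - 1) := by
  have := Nat.choose_symm (Nat.le_add_right (a-1) j)
  rwa [Nat.add_sub_cancel_left] at this

lemma rQ_rec_nat (a k : ℕ) (ha : 1 ≤ a) :
    k * Nat.choose (a - 1 + k) k = a * ∑ j ∈ Finset.range k, Nat.choose (a - 1 + j) j := by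
  have h2 : ∑ j ∈ Finset.range k, Nat.choose (a - 1 + j) j
      = ∑ m ∈ Finset.Ico (a-1) (a-1+k), Nat.choose m (a - 1) := by
    rw [Finset.sum_Ico_eq_sum_range]
    simp only [Nat.add_sub_cancel_left]
    exact Finset.sum_congr rfl (fun j _ => by rw [choose_symm' a j, Nat.add_comm (a-1) j])
  rcases Nat.eq_zero_or_pos k with rfl | hk
  · simp
  have h3 : ∑ m ∈ Finset.Ico (a-1) (a-1+k), Nat.choose m (a-1)
      = Nat.choose (a - 1 + k) a := by
    have he : Finset.Ico (a-1) (a-1+k) = Finset.Icc (a-1) (a-1+k-1) := by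
      ext x
      simp only [Finset.mem_Ico, Finset.mem_Icc]
      omega
    rw [he, Nat.sum_Icc_choose]
    congr 1 <;> omega
  rw [h2, h3]
  have h4 := Nat.choose_succ_right_eq (a - 1 + k) (a - 1)
  rw [show a - 1 + 1 = a by omega, show a - 1 + k - (a-1) = k by omega] at h4
  rw [choose_symm' a k, Nat.mul_comm k, ← h4, Nat.mul_comm]

lemma sum_reflect_Icc (f : ℕ → ℚ) (k : ℕ) :
    ∑ i ∈ Finset.Icc 1 k, f (k - i) = ∑ j ∈ Finset.range k, f j := by
  refine Finset.sum_nbij' (fun i => k - i) (fun j => k - j) ?_ ?_ ?_ ?_ ?_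
  · intro i hi
    rw [Finset.mem_Icc] at hi
    rw [Finset.mem_range]
    omega
  · intro j hj
    rw [Finset.mem_range] at hj
    rw [Finset.mem_Icc]
    omega
  · intro i hi
    rw [Finset.mem_Icc] at hi
    omega
  · intro j hj
    rw [Finset.mem_range] at hj
    omega
  · intro i _
    rfl

lemma rQ_rec (a k : ℕ) (ha : 1 ≤ a) :
    (k : ℚ) * rQ a k = (a : ℚ) * ∑ i ∈ Finset.Icc 1 k, rQ a (k - i) := by
  rw [sum_reflect_Icc (rQ a) k]
  simp only [rQ]
  exact_mod_cast rQ_rec_nat a k ha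

lemma block_sum_le (f : ℕ → ℚ) (hf0 : ∀ n, 0 ≤ f n) (hmono : Monotone f) (d k : ℕ)
    (hd : 1 ≤ d) :
    (d : ℚ) * ∑ j ∈ Finset.Icc 1 (k / d), f (k - j * d) ≤ ∑ i ∈ Finset.Icc 1 k, f (k - i) := by
  have main : ∀ N : ℕ, (d : ℚ) * ∑ j ∈ Finset.Icc 1 N, f (k - j * d)
      ≤ ∑ i ∈ Finset.Icc 1 (d * N), f (k - i) := by
    intro N
    induction N with
    | zero => simp
    | succ N ih =>
      rw [Finset.sum_Icc_succ_top (by omega : 1 ≤ N + 1)]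
      have hsplit : ∑ i ∈ Finset.Icc 1 (d * (N+1)), f (k - i)
          = (∑ i ∈ Finset.Icc 1 (d * N), f (k - i))
            + ∑ i ∈ Finset.Ioc (d * N) (d * (N+1)), f (k - i) := by
        rw [show Finset.Icc 1 (d * N) = Finset.Ioc 0 (d * N) by rfl,
            show Finset.Icc 1 (d * (N+1)) = Finset.Ioc 0 (d * (N+1)) by rfl]
        rw [Finset.sum_Ioc_consecutive _ (by omega) (by nlinarith)]
      rw [hsplit, mul_add]
      apply add_le_add ih
      have hblock : ∀ i ∈ Finset.Ioc (d * N) (d * (N+1)), f (k - (N+1) * d) ≤ f (k - i) := by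
        intro i hi
        rw [Finset.mem_Ioc] at hi
        have h2 : i ≤ (N+1) * d := by rw [Nat.mul_comm]; exact hi.2
        apply hmono
        omega
      have := Finset.card_nsmul_le_sum _ _ _ hblock
      rw [Nat.card_Ioc] at this
      have hcard : d * (N+1) - d * N = d := by rw [Nat.mul_succ]; omega
      rw [hcard, nsmul_eq_mul] at this
      exact_mod_cast this
  calc (d : ℚ) * ∑ j ∈ Finset.Icc 1 (k / d), f (k - j * d)
      ≤ ∑ i ∈ Finset.Icc 1 (d * (k / d)), f (k - i) := main (k / d)
    _ ≤ ∑ i ∈ Finset.Icc 1 k, f (k - i) := by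
        apply Finset.sum_le_sum_of_subset_of_nonneg
        · apply Finset.Icc_subset_Icc_right
          exact Nat.mul_div_le k d
        · intro i _ _
          exact hf0 _

lemma sum_multiples (f : ℕ → ℚ) (d k : ℕ) (hd : 1 ≤ d) :
    ∑ i ∈ Finset.Icc 1 k, (if d ∣ i then f (k - i) else 0)
      = ∑ j ∈ Finset.Icc 1 (k / d), f (k - j * d) := by
  rw [← Finset.sum_filter]
  refine Finset.sum_nbij' (fun i => i / d) (fun j => j * d) ?_ ?_ ?_ ?_ ?_
  · intro i hi
    rw [Finset.mem_filter, Finset.mem_Icc] at hi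
    obtain ⟨⟨h1, h2⟩, hdvd⟩ := hi
    rw [Finset.mem_Icc]
    constructor
    · rw [Nat.one_le_div_iff (by omega)]
      exact Nat.le_of_dvd (by omega) hdvd
    · exact Nat.div_le_div_right h2
  · intro j hj
    rw [Finset.mem_Icc] at hj
    rw [Finset.mem_filter, Finset.mem_Icc]
    refine ⟨⟨by nlinarith [hj.1], ?_⟩, dvd_mul_left d j⟩
    calc j * d ≤ (k / d) * d := Nat.mul_le_mul_right d hj.2
      _ ≤ k := Nat.div_mul_le_self k d
  · intro i hi
    rw [Finset.mem_filter] at hi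
    exact Nat.div_mul_cancel hi.2
  · intro j hj
    exact Nat.mul_div_cancel j (by omega)
  · intro i hi
    rw [Finset.mem_filter] at hi
    rw [Nat.div_mul_cancel hi.2]

lemma main_bound (s m d : ℕ) (hs : 1 ≤ s) (hd : 1 ≤ d) (k : ℕ) :
    hQ (fun i => if d ∣ i then ((s + d * m : ℕ) : ℚ) else ((s : ℕ) : ℚ)) k ≤ rQ (s + m) k := by
  induction k using Nat.strong_induction_on with
  | _ k ih =>
  set t : ℕ → ℚ := fun i => if d ∣ i then ((s + d * m : ℕ) : ℚ) else ((s : ℕ) : ℚ) with ht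
  have ht0 : ∀ i, 0 ≤ t i := by
    intro i; rw [ht]; dsimp only; split <;> positivity
  rcases Nat.eq_zero_or_pos k with rfl | hk
  · rw [hQ_zero, rQ_zero]
  have hkQ : (0:ℚ) < (k:ℚ) := by exact_mod_cast hk
  have ha : 1 ≤ s + m := by omega
  refine le_of_mul_le_mul_left ?_ hkQ
  rw [hQ_rec t k, rQ_rec (s+m) k ha]
  calc ∑ i ∈ Finset.Icc 1 k, t i * hQ t (k - i)
      ≤ ∑ i ∈ Finset.Icc 1 k, t i * rQ (s+m) (k - i) := by
        apply Finset.sum_le_sum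
        intro i hi
        have hi1 := (Finset.mem_Icc.mp hi).1
        exact mul_le_mul_of_nonneg_left (ih (k - i) (by omega)) (ht0 i)
    _ = (s:ℚ) * (∑ i ∈ Finset.Icc 1 k, rQ (s+m) (k-i))
        + (m:ℚ) * ((d:ℚ) * ∑ j ∈ Finset.Icc 1 (k / d), rQ (s+m) (k - j*d)) := by
        rw [← sum_multiples (rQ (s+m)) d k hd]
        rw [Finset.mul_sum, Finset.mul_sum, Finset.mul_sum, ← Finset.sum_add_distrib]
        apply Finset.sum_congr rfl
        intro i _
        rw [ht]; dsimp only
        by_cases h : d ∣ i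
        · simp only [h, if_true]
          push_cast
          ring
        · simp only [h, if_false]
          push_cast
          ring
    _ ≤ (s:ℚ) * (∑ i ∈ Finset.Icc 1 k, rQ (s+m) (k-i))
        + (m:ℚ) * (∑ i ∈ Finset.Icc 1 k, rQ (s+m) (k-i)) := by
        apply add_le_add_right
        refine mul_le_mul_of_nonneg_left ?_ (by positivity)
        exact block_sum_le _ (fun n => (rQ_pos _ n).le) (rQ_mono _) d k hd
    _ = ((s+m : ℕ):ℚ) * ∑ i ∈ Finset.Icc 1 k, rQ (s+m) (k-i) := by
        push_cast
        ring

lemma prod_range_to_Icc (k : ℕ) (g : ℕ → ℕ) :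
    ∏ i ∈ Finset.range k, g (i + 1) = ∏ j ∈ Finset.Icc 1 k, g j := by
  rw [← Finset.Ico_add_one_right_eq_Icc, Finset.prod_Ico_eq_prod_range]
  refine Finset.prod_congr (by congr 1) (fun i _ => by rw [Nat.add_comm])

theorem generating_function_periodic_values_bound (s d k q : ℕ)
    (hs : 0 < s) (hd : 0 < d) (hk : 0 < k) (hq : 0 < q)
    (hqs : s ≤ q) (hdvd : d ∣ q - s) :
    ∑ P : Nat.Partition k,
        NType k (fun i => Multiset.count i P.parts) *
          ∏ i ∈ Finset.range k,
            (if d ∣ (i + 1) then q else s) ^ Multiset.count (i + 1) P.parts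
      ≤ Nat.descFactorial (s + k + (q - s) / d - 1) k := by
  classical
  set m := (q - s) / d with hm
  have hq_eq : q = s + d * m := by
    obtain ⟨c, hc⟩ := hdvd
    have h2 : m = c := by rw [hm, hc]; exact Nat.mul_div_cancel_left c hd
    rw [h2]
    omega
  clear_value m
  set t : ℕ → ℚ := fun i => if d ∣ i then ((s + d * m : ℕ) : ℚ) else ((s : ℕ) : ℚ) with htdef
  set tN : ℕ → ℕ := fun i => if d ∣ i then q else s with htN
  -- per-partition identity
  have hterm : ∀ P : Nat.Partition k,
      ((NType k (fun i => Multiset.count i P.parts) *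
        ∏ i ∈ Finset.range k,
          (if d ∣ (i + 1) then q else s) ^ Multiset.count (i + 1) P.parts : ℕ) : ℚ)
      = (Nat.factorial k : ℚ) * ((P.parts.map t).prod / (Dm P.parts : ℚ)) := by
    intro P
    set M := P.parts with hM
    have hsub : M.toFinset ⊆ Finset.Icc 1 k := by
      intro x hx
      have hx' := Multiset.mem_toFinset.mp hx
      exact Finset.mem_Icc.mpr ⟨P.parts_pos hx', parts_le P hx'⟩
    have hcount0 : ∀ j ∈ Finset.Icc 1 k, j ∉ M.toFinset → M.count j = 0 := by
      intro j _ hj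
      rw [Multiset.count_eq_zero]
      exact fun h => hj (Multiset.mem_toFinset.mpr h)
    have hD : ∏ i ∈ Finset.range k, ((i + 1) ^ M.count (i+1) * Nat.factorial (M.count (i+1)))
        = Dm M := by
      rw [prod_range_to_Icc k (fun j => j ^ M.count j * Nat.factorial (M.count j))]
      rw [← Finset.prod_subset hsub (fun j hj hj' => by
        rw [hcount0 j hj hj']; simp)]
      exact (Dm_eq M).symm
    have hW : ∏ i ∈ Finset.range k,
        (if d ∣ (i + 1) then q else s) ^ Multiset.count (i + 1) M
        = (M.map tN).prod := by
      rw [prod_range_to_Icc k (fun j => tN j ^ M.count j)]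
      rw [← Finset.prod_subset hsub (fun j hj hj' => by rw [hcount0 j hj hj']; simp)]
      exact (Finset.prod_multiset_map_count M tN).symm
    have hdvdD : Dm M ∣ Nat.factorial k := by
      have := Dm_dvd (M := M) (fun x hx => P.parts_pos hx)
      rwa [P.parts_sum] at this
    have hDpos : 0 < Dm M := Dm_pos (fun x hx => P.parts_pos hx)
    have hcastmap : ((M.map tN).map (Nat.cast : ℕ → ℚ)).prod = (M.map t).prod := by
      rw [Multiset.map_map]
      congr 1
      apply Multiset.map_congr rfl
      intro x _
      simp only [Function.comp_apply, htN, htdef]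
      split
      · rw [hq_eq]
      · rfl
    rw [NType, hD, hW]
    push_cast [Nat.cast_div hdvdD (Nat.cast_ne_zero.mpr hDpos.ne' : ((Dm M : ℚ)) ≠ 0)]
    rw [hcastmap]
    ring
  -- assemble
  rw [← Nat.cast_le (α := ℚ), Nat.cast_sum]
  calc ∑ P : Nat.Partition k, ((NType k (fun i => Multiset.count i P.parts) *
          ∏ i ∈ Finset.range k,
            (if d ∣ (i + 1) then q else s) ^ Multiset.count (i + 1) P.parts : ℕ) : ℚ)
      = (Nat.factorial k : ℚ) * hQ t k := by
        rw [hQ, Finset.mul_sum]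
        exact Finset.sum_congr rfl (fun P _ => hterm P)
    _ ≤ (Nat.factorial k : ℚ) * rQ (s + m) k := by
        refine mul_le_mul_of_nonneg_left ?_ (by positivity)
        exact main_bound s m d hs hd k
    _ = ((Nat.descFactorial (s + k + m - 1) k : ℕ) : ℚ) := by
        rw [show s + k + m - 1 = (s + m) - 1 + k by omega,
            Nat.descFactorial_eq_factorial_mul_choose]
        push_cast
        rw [rQ]
end

section
/- Let F_q be a finite field, d_1,…,d_n positive integers, and b, a_1,…,a_n ∈ F_q^*. Let N* be the number of solutions (x_1,…,x_n) ∈ (F_q^*)^n of a_1·x_1^{d_1} + ⋯ + a_n·x_n^{d_n} = b. Then |N* − (1/q)·[(q−1)^n − (−1)^n]| ≤ Σ_{e=0}^{n−1} Σ_{1≤i_{e+1}<i_{e+2}<⋯<i_n≤n} (∏_{j=e+1}^{n} (gcd(d_{i_j}, q−1) − 1)) · (√q)^{n−e−1}. In particular, if d_i = m | (q−1) for all i, then |N* − (1/q)·[(q−1)^n − (−1)^n]| < (1 + (m−1)√q)^n / √q. -/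
open scoped Classical

open Finset

namespace DiagAux

set_option linter.unusedSectionVars false
set_option linter.unusedVariables false

variable {F : Type*} [Field F] [Fintype F]

variable {F : Type*} [Field F] [Fintype F]

lemma mulChar_abs_apply (χ : MulChar F ℂ) {u : F} (hu : u ≠ 0) : ‖χ u‖ = 1 := by
  obtain ⟨ζ, hζ, h⟩ := χ.apply_mem_rootsOfUnity_orderOf hu
  have : NeZero (orderOf χ) := ⟨(orderOf_pos χ).ne'⟩
  rw [← h]
  exact Complex.norm_eq_one_of_mem_rootsOfUnity hζ

lemma mulChar_apply_ne_zero (χ : MulChar F ℂ) {u : F} (hu : u ≠ 0) : χ u ≠ 0 := by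
  intro h
  have := mulChar_abs_apply χ hu
  rw [h] at this
  simp at this

lemma mulChar_prod_apply {ι : Type*} (s : Finset ι) (χ : ι → MulChar F ℂ) {u : F} (hu : u ≠ 0) :
    (∏ i ∈ s, χ i) u = ∏ i ∈ s, χ i u := by
  induction s using Finset.cons_induction with
  | empty => simpa using MulChar.one_apply hu.isUnit
  | cons i s his ih => rw [Finset.prod_cons, MulChar.mul_apply, ih, Finset.prod_cons]

lemma addChar_map_sum {ι : Type*} (ψ : AddChar F ℂ) (s : Finset ι) (f : ι → F) :
    ψ (∑ i ∈ s, f i) = ∏ i ∈ s, ψ (f i) := by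
  induction s using Finset.cons_induction with
  | empty => simp
  | cons i s his ih => rw [Finset.sum_cons, AddChar.map_add_eq_mul, ih, Finset.prod_cons]

lemma abs_gaussSum {χ : MulChar F ℂ} (hχ : χ ≠ 1) {ψ : AddChar F ℂ} (hψ : ψ.IsPrimitive) :
    ‖gaussSum χ ψ‖ = Real.sqrt (Fintype.card F) := by
  have h := gaussSum_mul_gaussSum_eq_card hχ hψ
  have hchar : 0 < ringChar F := Nat.pos_of_ne_zero (CharP.ringChar_ne_zero_of_finite F)
  have hconj : gaussSum χ⁻¹ ψ⁻¹ = (starRingEnd ℂ) (gaussSum χ ψ) := by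
    unfold gaussSum
    rw [map_sum]
    refine Finset.sum_congr rfl fun t _ => ?_
    rw [map_mul, ← AddChar.starComp_apply hchar,
      show (starRingEnd ℂ) (χ t) = star (χ t) from rfl, MulChar.star_apply']
  rw [hconj, Complex.mul_conj] at h
  have h2 : Complex.normSq (gaussSum χ ψ) = (Fintype.card F : ℝ) := by
    exact_mod_cast h
  rw [Complex.norm_def, h2]


set_option maxHeartbeats 1000000 in
lemma count_pow (d : ℕ) (hd : 0 < d) {χ : MulChar F ℂ}
    (hχ : orderOf χ = Nat.gcd d (Fintype.card F - 1)) {u : F} (hu : u ≠ 0) :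
    ((univ.filter fun x : F => x ≠ 0 ∧ x ^ d = u).card : ℂ)
      = ∑ k ∈ range (Nat.gcd d (Fintype.card F - 1)), χ u ^ k := by
  have hq : 1 < Fintype.card F := Fintype.one_lt_card
  set N := Fintype.card F - 1 with hNdef
  have hN : 0 < N := by omega
  set g := Nat.gcd d N with hgdef
  have hgd : g ∣ d := Nat.gcd_dvd_left _ _
  have hgN : g ∣ N := Nat.gcd_dvd_right _ _
  have hg : 0 < g := Nat.gcd_pos_of_pos_left _ hd
  have hχg : χ ^ g = 1 := by rw [← hχ]; exact pow_orderOf_eq_one χ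
  have hvg : ∀ v : F, v ≠ 0 → χ v ^ g = 1 := fun v hv => by
    rw [← MulChar.pow_apply' χ hg.ne' v, hχg, MulChar.one_apply hv.isUnit]
  -- geometric sum
  have hgeom : ∀ v : F, v ≠ 0 → ∑ k ∈ range g, χ v ^ k = if χ v = 1 then (g : ℂ) else 0 := by
    intro v hv
    split_ifs with h
    · simp [h]
    · rw [geom_sum_eq h, hvg v hv, sub_self, zero_div]
  -- card of g-th roots of unity is g
  have hrootsg : (univ.filter fun y : F => y ^ g = 1).card = g := by
    obtain ⟨γ, hγ⟩ := IsCyclic.exists_generator (α := Fˣ)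
    have hordγ : orderOf γ = N := by
      rw [orderOf_eq_card_of_forall_mem_zpowers hγ, Nat.card_eq_fintype_card,
        Fintype.card_units]
    have hord : orderOf (γ ^ (N / g)) = g := by
      rw [orderOf_pow, hordγ, Nat.gcd_eq_right (Nat.div_dvd_of_dvd hgN),
        Nat.div_div_self hgN hN.ne']
    have hprim : IsPrimitiveRoot ((γ ^ (N / g) : Fˣ) : F) g := by
      rw [IsPrimitiveRoot.coe_units_iff]
      have h := IsPrimitiveRoot.orderOf (γ ^ (N / g))
      rwa [hord] at h
    have hset : (univ.filter fun y : F => y ^ g = 1) = Polynomial.nthRootsFinset g (1 : F) := by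
      ext y
      simp [Polynomial.mem_nthRootsFinset hg (1 : F)]
    rw [hset, hprim.card_nthRootsFinset]
  -- {y ≠ 0 ∧ y^d = 1} = {y^g = 1}
  have hfilter1 : (univ.filter fun y : F => y ≠ 0 ∧ y ^ d = 1)
      = univ.filter fun y : F => y ^ g = 1 := by
    ext y
    simp only [mem_filter, mem_univ, true_and]
    constructor
    · rintro ⟨hy, hyd⟩
      have h1 : orderOf y ∣ d := orderOf_dvd_of_pow_eq_one hyd
      have h2 : orderOf y ∣ N := orderOf_dvd_of_pow_eq_one
        (FiniteField.pow_card_sub_one_eq_one y hy)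
      exact orderOf_dvd_iff_pow_eq_one.mp (Nat.dvd_gcd h1 h2)
    · intro hyg
      have hy : y ≠ 0 := by
        rintro rfl
        rw [zero_pow hg.ne'] at hyg
        exact zero_ne_one hyg
      refine ⟨hy, ?_⟩
      have : y ^ d = (y ^ g) ^ (d / g) := by rw [← pow_mul, Nat.mul_div_cancel' hgd]
      rw [this, hyg, one_pow]
  have hcards : (univ.filter fun x : F => x ≠ 0).card = N := by
    rw [Finset.filter_ne', Finset.card_erase_of_mem (mem_univ 0), Finset.card_univ]
  -- claim: nonempty fibers have size g and character value 1
  have hclaim : ∀ v : F, v ≠ 0 → (univ.filter fun x : F => x ≠ 0 ∧ x ^ d = v).card ≠ 0 →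
      χ v = 1 ∧ (univ.filter fun x : F => x ≠ 0 ∧ x ^ d = v).card = g := by
    intro v hv hmv
    obtain ⟨x₀, hx₀⟩ := Finset.card_ne_zero.mp hmv
    rw [mem_filter] at hx₀
    obtain ⟨-, hx₀0, hx₀d⟩ := hx₀
    constructor
    · have : χ v = χ x₀ ^ d := by rw [← hx₀d, map_pow]
      rw [this, show χ x₀ ^ d = (χ x₀ ^ g) ^ (d / g) by
        rw [← pow_mul, Nat.mul_div_cancel' hgd], hvg x₀ hx₀0, one_pow]
    · have hcardeq : (univ.filter fun x : F => x ≠ 0 ∧ x ^ d = v).card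
          = (univ.filter fun y : F => y ≠ 0 ∧ y ^ d = 1).card := by
        refine Finset.card_nbij' (fun x => x * x₀⁻¹) (fun y => y * x₀) ?_ ?_ ?_ ?_
        · intro x hx
          rw [mem_coe, mem_filter] at hx ⊢
          obtain ⟨-, hx0, hxd⟩ := hx
          refine ⟨mem_univ _, mul_ne_zero hx0 (inv_ne_zero hx₀0), ?_⟩
          rw [mul_pow, inv_pow, hxd, ← hx₀d, mul_inv_cancel₀ (pow_ne_zero _ hx₀0)]
        · intro y hy
          rw [mem_coe, mem_filter] at hy ⊢
          obtain ⟨-, hy0, hyd⟩ := hy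
          refine ⟨mem_univ _, mul_ne_zero hy0 hx₀0, ?_⟩
          rw [mul_pow, hyd, one_mul, hx₀d]
        · intro x hx
          field_simp
        · intro y hy
          field_simp
      rw [hcardeq, hfilter1, hrootsg]
  -- fiber total
  have hfibertotal : ∑ v ∈ univ.filter (fun v : F => v ≠ 0),
      (univ.filter fun x : F => x ≠ 0 ∧ x ^ d = v).card = N := by
    have hmaps : ∀ x ∈ univ.filter (fun x : F => x ≠ 0), x ^ d ∈
        univ.filter (fun v : F => v ≠ 0) := by
      intro x hx
      rw [mem_filter] at hx ⊢
      exact ⟨mem_univ _, pow_ne_zero _ hx.2⟩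
    have := Finset.card_eq_sum_card_fiberwise hmaps
    rw [hcards] at this
    rw [this]
    refine Finset.sum_congr rfl fun v hv => ?_
    rw [Finset.filter_filter]
  -- character sum total
  have hsum_k : ∀ k ∈ range g, ∑ v ∈ univ.filter (fun v : F => v ≠ 0), χ v ^ k
      = if k = 0 then (N : ℂ) else 0 := by
    intro k hk
    split_ifs with hk0
    · subst hk0
      simp [hcards]
    · have hne : χ ^ k ≠ 1 := by
        intro h
        have h2 := hχ ▸ orderOf_dvd_of_pow_eq_one h
        exact absurd (Nat.le_of_dvd (Nat.pos_of_ne_zero hk0) h2)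
          (not_le.mpr (mem_range.mp hk))
      have e1 : ∑ v ∈ univ.filter (fun v : F => v ≠ 0), χ v ^ k
          = ∑ v ∈ univ.filter (fun v : F => v ≠ 0), (χ ^ k) v :=
        Finset.sum_congr rfl fun v _ => (MulChar.pow_apply' χ hk0 v).symm
      rw [e1, Finset.filter_ne', Finset.sum_erase_eq_sub (mem_univ 0),
        MulChar.sum_eq_zero_of_ne_one hne, (χ ^ k).map_nonunit not_isUnit_zero, sub_zero]
  have hchartotal : ∑ v ∈ univ.filter (fun v : F => v ≠ 0),
      (if χ v = 1 then (g : ℂ) else 0) = (N : ℂ) := by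
    have e1 : ∑ v ∈ univ.filter (fun v : F => v ≠ 0), (if χ v = 1 then (g : ℂ) else 0)
        = ∑ v ∈ univ.filter (fun v : F => v ≠ 0), ∑ k ∈ range g, χ v ^ k := by
      refine Finset.sum_congr rfl fun v hv => ?_
      rw [hgeom v (mem_filter.mp hv).2]
    rw [e1, Finset.sum_comm, Finset.sum_congr rfl hsum_k]
    simp [Finset.sum_ite_eq', hg]
  -- A = B
  set A := univ.filter (fun v : F => v ≠ 0 ∧ χ v = 1) with hA
  set B := univ.filter (fun v : F => v ≠ 0 ∧
    (univ.filter fun x : F => x ≠ 0 ∧ x ^ d = v).card ≠ 0) with hB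
  have hBA : B ⊆ A := by
    intro v hv
    rw [hB, mem_filter] at hv
    rw [hA, mem_filter]
    exact ⟨hv.1, hv.2.1, (hclaim v hv.2.1 hv.2.2).1⟩
  have hcardA : A.card * g = N := by
    have e1 : ∑ v ∈ univ.filter (fun v : F => v ≠ 0), (if χ v = 1 then (g : ℂ) else 0)
        = (A.card : ℂ) * g := by
      rw [Finset.sum_ite, Finset.sum_const_zero, add_zero, Finset.sum_const,
        Finset.filter_filter, nsmul_eq_mul]
    rw [e1] at hchartotal
    exact_mod_cast hchartotal
  have hcardB : B.card * g = N := by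
    have e1 : ∑ v ∈ univ.filter (fun v : F => v ≠ 0),
        (univ.filter fun x : F => x ≠ 0 ∧ x ^ d = v).card = ∑ v ∈ B,
        (univ.filter fun x : F => x ≠ 0 ∧ x ^ d = v).card := by
      rw [hB]
      rw [show univ.filter (fun v : F => v ≠ 0 ∧
          (univ.filter fun x : F => x ≠ 0 ∧ x ^ d = v).card ≠ 0)
        = (univ.filter (fun v : F => v ≠ 0)).filter
          (fun v => (univ.filter fun x : F => x ≠ 0 ∧ x ^ d = v).card ≠ 0) by
        rw [Finset.filter_filter]]
      rw [Finset.sum_filter_ne_zero]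
    have e2 : ∑ v ∈ B, (univ.filter fun x : F => x ≠ 0 ∧ x ^ d = v).card = B.card * g := by
      have hpt : ∀ v ∈ B, (univ.filter fun x : F => x ≠ 0 ∧ x ^ d = v).card = g := by
        intro v hv
        rw [hB, mem_filter] at hv
        exact (hclaim v hv.2.1 hv.2.2).2
      exact (Finset.sum_congr rfl hpt).trans (by rw [Finset.sum_const, smul_eq_mul])
    rw [e1, e2] at hfibertotal
    exact hfibertotal
  have hAB : A = B :=
    (Finset.eq_of_subset_of_card_le hBA (le_of_eq
      (Nat.eq_of_mul_eq_mul_right hg (hcardA.trans hcardB.symm)))).symm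
  -- conclude
  have hmg : ((univ.filter fun x : F => x ≠ 0 ∧ x ^ d = u).card : ℂ)
      = if χ u = 1 then (g : ℂ) else 0 := by
    by_cases h : χ u = 1
    · have huA : u ∈ A := by rw [hA, mem_filter]; exact ⟨mem_univ _, hu, h⟩
      rw [hAB, hB, mem_filter] at huA
      rw [(hclaim u hu huA.2.2).2, if_pos h]
    · have huA : u ∉ A := by rw [hA, mem_filter]; tauto
      rw [hAB, hB, mem_filter] at huA
      have : (univ.filter fun x : F => x ≠ 0 ∧ x ^ d = u).card = 0 := by
        by_contra hne
        exact huA ⟨mem_univ _, hu, hne⟩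
      rw [this, if_neg h]
      simp
  rw [hmg, hgeom u hu]

lemma sum_psi_ne_zero {ψ : AddChar F ℂ} (hψ : ψ.IsPrimitive) {c : F} (hc : c ≠ 0) :
    ∑ u ∈ univ.filter (fun u : F => u ≠ 0), ψ (u * c) = -1 := by
  have h := AddChar.sum_mulShift c hψ
  rw [if_neg hc] at h
  rw [Finset.filter_ne', Finset.sum_erase_eq_sub (mem_univ 0), h]
  simp

lemma sum_chi_psi_eq {ψ : AddChar F ℂ} (hψ : ψ.IsPrimitive) {χ : MulChar F ℂ} (hχ : χ ≠ 1)
    {c : F} (hc : c ≠ 0) :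
    ∑ u ∈ univ.filter (fun u : F => u ≠ 0), χ u * ψ (u * c) = χ⁻¹ c * gaussSum χ ψ := by
  have h1 : ∑ u ∈ univ.filter (fun u : F => u ≠ 0), χ u * ψ (u * c)
      = gaussSum χ (ψ.mulShift c) := by
    rw [Finset.filter_ne', Finset.sum_erase_eq_sub (mem_univ 0),
      MulChar.map_nonunit χ not_isUnit_zero, zero_mul, sub_zero]
    unfold gaussSum
    refine Finset.sum_congr rfl fun u _ => ?_
    rw [AddChar.mulShift_apply, mul_comm c u]
  have h2 := gaussSum_mulShift χ ψ (Units.mk0 c hc)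
  have hc' : χ c ≠ 0 := fun h => by
    have := mulChar_abs_apply χ hc
    rw [h] at this; simp at this
  rw [h1, MulChar.inv_apply']
  have hcoe : (Units.mk0 c hc : F) = c := rfl
  rw [hcoe] at h2
  have h3 : χ c⁻¹ * χ c = 1 := by rw [← map_mul, inv_mul_cancel₀ hc, map_one]
  calc gaussSum χ (ψ.mulShift c) = (χ c⁻¹ * χ c) * gaussSum χ (ψ.mulShift c) := by
        rw [h3, one_mul]
    _ = χ c⁻¹ * gaussSum χ ψ := by rw [mul_assoc, h2]

lemma abs_sum_chi_psi_le {ψ : AddChar F ℂ} (hψ : ψ.IsPrimitive) (χ : MulChar F ℂ)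
    {c : F} (hc : c ≠ 0) :
    ‖∑ u ∈ univ.filter (fun u : F => u ≠ 0), χ u * ψ (u * c)‖
      ≤ Real.sqrt (Fintype.card F) := by
  have hq : (1:ℝ) ≤ Fintype.card F := by exact_mod_cast Fintype.one_lt_card.le
  by_cases hχ : χ = 1
  · have : ∑ u ∈ univ.filter (fun u : F => u ≠ 0), χ u * ψ (u * c)
        = ∑ u ∈ univ.filter (fun u : F => u ≠ 0), ψ (u * c) := by
      refine Finset.sum_congr rfl fun u hu => ?_
      rw [hχ, MulChar.one_apply (mem_filter.mp hu).2.isUnit, one_mul]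
    rw [this, sum_psi_ne_zero hψ hc]
    simpa using Real.one_le_sqrt.mpr hq
  · rw [sum_chi_psi_eq hψ hχ hc, norm_mul, mulChar_abs_apply χ⁻¹ hc, one_mul,
      abs_gaussSum hχ hψ]

set_option maxHeartbeats 2000000 in
lemma part1 {n : ℕ} (d : Fin n → ℕ) (hd : ∀ i, 0 < d i) (a : Fin n → F) (ha : ∀ i, a i ≠ 0)
    (b : F) (hb : b ≠ 0) :
    (|(((Finset.univ.filter fun x : Fin n → F =>
              (∀ i, x i ≠ 0) ∧ ∑ i, a i * x i ^ d i = b).card : ℝ))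
          - (1 / (Fintype.card F : ℝ)) *
              (((Fintype.card F : ℝ) - 1) ^ n - (-1 : ℝ) ^ n)|
        ≤ ∑ e ∈ Finset.range n,
            ∑ S ∈ Finset.powersetCard (n - e) (Finset.univ : Finset (Fin n)),
              (∏ j ∈ S, ((Nat.gcd (d j) (Fintype.card F - 1) : ℝ) - 1)) *
                Real.sqrt (Fintype.card F) ^ (n - e - 1)) := by
  classical
  have hq : 1 < Fintype.card F := Fintype.one_lt_card
  set q := Fintype.card F with hqdef
  have hq0 : (0:ℝ) < q := by exact_mod_cast Nat.zero_lt_of_lt hq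
  set N := q - 1 with hNdef
  have hN : 0 < N := by omega
  set sq := Real.sqrt q with hsqdef
  have hsq0 : (0:ℝ) < sq := Real.sqrt_pos.mpr hq0
  have hsqsq : sq * sq = (q:ℝ) := Real.mul_self_sqrt hq0.le
  set ψ := AddChar.FiniteField.primitiveChar_to_Complex F with hψdef
  have hψ : ψ.IsPrimitive := AddChar.FiniteField.primitiveChar_to_Complex_isPrimitive F
  set g : Fin n → ℕ := fun i => Nat.gcd (d i) N with hgdef
  have hg0 : ∀ i, 0 < g i := fun i => Nat.gcd_pos_of_pos_left _ (hd i)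
  have hg1 : ∀ i, 1 ≤ g i := hg0
  have hχex : ∀ i : Fin n, ∃ χ : MulChar F ℂ, orderOf χ = g i := fun i =>
    MulChar.exists_mulChar_orderOf F (Nat.gcd_dvd_right _ _)
      (Complex.isPrimitiveRoot_exp _ (hg0 i).ne')
  choose χ hχ using hχex
  have hχpow_ne : ∀ i : Fin n, ∀ k, k ≠ 0 → k < g i → χ i ^ k ≠ 1 := by
    intro i k hk0 hkg h
    have h2 := (hχ i) ▸ orderOf_dvd_of_pow_eq_one h
    exact absurd (Nat.le_of_dvd (Nat.pos_of_ne_zero hk0) h2) (not_le.mpr hkg)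
  set Fs : Finset F := univ.filter (fun u : F => u ≠ 0) with hFs
  have hFscard : Fs.card = N := by
    rw [hFs, Finset.filter_ne', Finset.card_erase_of_mem (mem_univ 0), Finset.card_univ]
  set X : Finset (Fin n → F) := univ.filter (fun x : Fin n → F => ∀ i, x i ≠ 0) with hX
  have hXpi : X = Fintype.piFinset (fun _ : Fin n => Fs) := by
    ext x
    simp [hX, hFs, Fintype.mem_piFinset]
  have hXcard : X.card = N ^ n := by
    rw [hXpi, Fintype.card_piFinset]
    simp [hFscard]
  have orth : ∀ c : F, ∑ t : F, ψ (t * c) = if c = 0 then (q:ℂ) else 0 := by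
    intro c
    rw [AddChar.sum_mulShift c hψ]
    split_ifs <;> simp [hqdef]
  set Nstar : ℕ := (univ.filter fun x : Fin n → F =>
      (∀ i, x i ≠ 0) ∧ ∑ i, a i * x i ^ d i = b).card with hNstar
  -- step 1+2 : orthogonality
  have step12 : (q:ℂ) * Nstar = ∑ t : F, ∑ x ∈ X, ψ (t * ((∑ i, a i * x i ^ d i) - b)) := by
    rw [Finset.sum_comm]
    have e1 : ∀ x ∈ X, ∑ t : F, ψ (t * ((∑ i, a i * x i ^ d i) - b))
        = if (∑ i, a i * x i ^ d i) - b = 0 then (q:ℂ) else 0 := fun x _ => orth _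
    rw [Finset.sum_congr rfl e1, Finset.sum_ite, Finset.sum_const_zero, add_zero,
      Finset.sum_const, nsmul_eq_mul]
    have e2 : X.filter (fun x => (∑ i, a i * x i ^ d i) - b = 0)
        = univ.filter fun x : Fin n → F => (∀ i, x i ≠ 0) ∧ ∑ i, a i * x i ^ d i = b := by
      rw [hX, Finset.filter_filter]
      exact Finset.filter_congr fun x _ => by rw [sub_eq_zero]
    rw [e2, ← hNstar, mul_comm]
  set Φ : Fin n → ℕ → F → ℂ := fun i k t => ∑ u ∈ Fs, χ i u ^ k * ψ (u * (t * a i)) with hΦ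
  -- step 4
  have step4 : ∀ i : Fin n, ∀ t ∈ Fs, (∑ y ∈ Fs, ψ (t * (a i * y ^ d i)))
      = ∑ k ∈ range (g i), Φ i k t := by
    intro i t ht
    have ht0 : t ≠ 0 := by rw [hFs, mem_filter] at ht; exact ht.2
    have hmaps : ∀ y ∈ Fs, y ^ d i ∈ Fs := by
      intro y hy
      rw [hFs, mem_filter] at hy ⊢
      exact ⟨mem_univ _, pow_ne_zero _ hy.2⟩
    have e2 : ∑ y ∈ Fs, ψ (t * (a i * y ^ d i))
        = ∑ u ∈ Fs, ∑ y ∈ Fs.filter (fun y => y ^ d i = u), ψ (t * (a i * y ^ d i)) :=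
      (Finset.sum_fiberwise_of_maps_to hmaps _).symm
    rw [e2]
    have e3 : ∀ u ∈ Fs, ∑ y ∈ Fs.filter (fun y => y ^ d i = u), ψ (t * (a i * y ^ d i))
        = ((univ.filter fun x : F => x ≠ 0 ∧ x ^ d i = u).card : ℂ) * ψ (u * (t * a i)) := by
      intro u hu
      have hcongr : ∀ y ∈ Fs.filter (fun y => y ^ d i = u),
          ψ (t * (a i * y ^ d i)) = ψ (u * (t * a i)) := by
        intro y hy
        rw [mem_filter] at hy
        rw [show t * (a i * y ^ d i) = y ^ d i * (t * a i) by ring, hy.2]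
      rw [Finset.sum_congr rfl hcongr, Finset.sum_const, nsmul_eq_mul]
      congr 2
      rw [hFs, Finset.filter_filter]
    rw [Finset.sum_congr rfl e3]
    have e4 : ∀ u ∈ Fs, ((univ.filter fun x : F => x ≠ 0 ∧ x ^ d i = u).card : ℂ)
          * ψ (u * (t * a i))
        = ∑ k ∈ range (g i), χ i u ^ k * ψ (u * (t * a i)) := by
      intro u hu
      have hu0 : u ≠ 0 := by rw [hFs, mem_filter] at hu; exact hu.2
      have hcp := count_pow (d i) (hd i) (hχ i) hu0
      rw [hcp, Finset.sum_mul]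
    rw [Finset.sum_congr rfl e4, Finset.sum_comm]
  -- step 5
  have step5 : ∀ i : Fin n, ∀ t ∈ Fs, Φ i 0 t = -1 := by
    intro i t ht
    have ht0 : t ≠ 0 := by rw [hFs, mem_filter] at ht; exact ht.2
    have hta : t * a i ≠ 0 := mul_ne_zero ht0 (ha i)
    rw [hΦ]
    simp only [pow_zero, one_mul]
    rw [hFs]
    exact sum_psi_ne_zero hψ hta
  set K : Finset (Fin n → ℕ) := Fintype.piFinset (fun i => range (g i)) with hK
  set W : (Fin n → ℕ) → ℂ := fun k => ∑ t ∈ Fs, ψ (t * (-b)) * ∏ i, Φ i (k i) t with hW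
  -- step 3
  have step3 : ∀ t : F, ∑ x ∈ X, ψ (t * ((∑ i, a i * x i ^ d i) - b))
      = ψ (t * (-b)) * ∏ i, (∑ y ∈ Fs, ψ (t * (a i * y ^ d i))) := by
    intro t
    have expand : ∀ x : Fin n → F, ψ (t * ((∑ i, a i * x i ^ d i) - b))
        = ψ (t * (-b)) * ∏ i, ψ (t * (a i * x i ^ d i)) := by
      intro x
      rw [show t * ((∑ i, a i * x i ^ d i) - b) = t * (-b) + ∑ i, t * (a i * x i ^ d i) by
        rw [← Finset.mul_sum]; ring]
      rw [AddChar.map_add_eq_mul, addChar_map_sum]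
    rw [Finset.sum_congr rfl (fun x _ => expand x), ← Finset.mul_sum]
    congr 1
    rw [hXpi]
    exact (Finset.prod_univ_sum (fun _ : Fin n => Fs)
      (fun i y => ψ (t * (a i * y ^ d i)))).symm
  -- step 6
  have step6 : (q:ℂ) * Nstar = ((N:ℕ):ℂ) ^ n + ∑ k ∈ K, W k := by
    rw [step12]
    have esplit : ∑ t : F, ∑ x ∈ X, ψ (t * ((∑ i, a i * x i ^ d i) - b))
        = (∑ x ∈ X, ψ (0 * ((∑ i, a i * x i ^ d i) - b)))
          + ∑ t ∈ Fs, ∑ x ∈ X, ψ (t * ((∑ i, a i * x i ^ d i) - b)) := by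
      rw [hFs, Finset.filter_ne']
      exact (Finset.add_sum_erase univ _ (mem_univ 0)).symm
    rw [esplit]
    congr 1
    · have e0 : ∀ x ∈ X, ψ (0 * ((∑ i, a i * x i ^ d i) - b)) = 1 := fun x _ => by
        rw [zero_mul, AddChar.map_zero_eq_one]
      rw [Finset.sum_congr rfl e0, Finset.sum_const, nsmul_eq_mul, mul_one, hXcard]
      push_cast
      ring
    · have e1 : ∀ t ∈ Fs, ∑ x ∈ X, ψ (t * ((∑ i, a i * x i ^ d i) - b))
          = ∑ k ∈ K, ψ (t * (-b)) * ∏ i, Φ i (k i) t := by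
        intro t ht
        rw [step3 t]
        have e2 : ∏ i, (∑ y ∈ Fs, ψ (t * (a i * y ^ d i))) = ∑ k ∈ K, ∏ i, Φ i (k i) t := by
          rw [Finset.prod_congr rfl (fun i _ => step4 i t ht), hK]
          exact Finset.prod_univ_sum _ _
        rw [e2, Finset.mul_sum]
      rw [Finset.sum_congr rfl e1, Finset.sum_comm]
  have hk0K : (0 : Fin n → ℕ) ∈ K := by
    rw [hK, Fintype.mem_piFinset]
    intro i
    simpa using hg0 i
  -- step 7
  have step7 : W 0 = -(-1:ℂ) ^ n := by
    rw [hW]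
    dsimp only
    have e1 : ∀ t ∈ Fs, ψ (t * (-b)) * ∏ i, Φ i ((0 : Fin n → ℕ) i) t
        = (-1:ℂ) ^ n * ψ (t * (-b)) := by
      intro t ht
      have : ∀ i : Fin n, Φ i ((0 : Fin n → ℕ) i) t = -1 := fun i => by
        rw [Pi.zero_apply]; exact step5 i t ht
      rw [Finset.prod_congr rfl (fun i _ => this i), Finset.prod_const, Finset.card_univ,
        Fintype.card_fin, mul_comm]
    rw [Finset.sum_congr rfl e1, ← Finset.mul_sum, hFs, sum_psi_ne_zero hψ (neg_ne_zero.mpr hb)]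
    ring
  -- key identity
  have key : (q:ℂ) * Nstar - (((q:ℂ) - 1) ^ n - (-1) ^ n) = ∑ k ∈ K.erase 0, W k := by
    have hNc : ((N:ℕ):ℂ) = (q:ℂ) - 1 := by
      rw [hNdef]
      push_cast [Nat.cast_sub hq.le]
      ring
    rw [step6, ← Finset.add_sum_erase K W hk0K, step7, hNc]
    ring
  -- bound on each W k
  have bound : ∀ k ∈ K.erase 0, ‖W k‖
      ≤ sq ^ ((univ.filter fun i => k i ≠ 0).card + 1) := by
    intro k hk
    obtain ⟨hkne, hkK⟩ := Finset.mem_erase.mp hk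
    have hklt : ∀ i, k i < g i := by
      intro i
      rw [hK, Fintype.mem_piFinset] at hkK
      simpa [mem_range] using hkK i
    set c : ℕ := (univ.filter (fun i : Fin n => ¬ k i ≠ 0)).card with hc
    set τ : Fin n → ℂ := fun i => gaussSum (χ i ^ k i) ψ with hτ
    set Θ : MulChar F ℂ := ∏ i ∈ univ.filter (fun i : Fin n => k i ≠ 0), (χ i ^ k i)⁻¹ with hΘ
    set C : ℂ := ∏ i ∈ univ.filter (fun i : Fin n => k i ≠ 0),
      ((χ i ^ k i)⁻¹ (a i) * τ i) with hC
    have hprod : ∀ t ∈ Fs, ∏ i, Φ i (k i) t = (-1:ℂ) ^ c * (Θ t * C) := by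
      intro t ht
      have ht0 : t ≠ 0 := by rw [hFs, mem_filter] at ht; exact ht.2
      rw [← Finset.prod_filter_mul_prod_filter_not univ (fun i => k i ≠ 0)]
      have e1 : ∏ i ∈ univ.filter (fun i : Fin n => ¬ k i ≠ 0), Φ i (k i) t
          = (-1:ℂ) ^ c := by
        have hper : ∀ i ∈ univ.filter (fun i : Fin n => ¬ k i ≠ 0), Φ i (k i) t = -1 := by
          intro i hi
          have hki : k i = 0 := not_not.mp (mem_filter.mp hi).2
          rw [hki]
          exact step5 i t ht
        rw [Finset.prod_congr rfl hper, Finset.prod_const, hc]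
      have e2 : ∏ i ∈ univ.filter (fun i : Fin n => k i ≠ 0), Φ i (k i) t = Θ t * C := by
        have hper : ∀ i ∈ univ.filter (fun i : Fin n => k i ≠ 0), Φ i (k i) t
            = (χ i ^ k i)⁻¹ t * ((χ i ^ k i)⁻¹ (a i) * τ i) := by
          intro i hi
          have hki : k i ≠ 0 := (mem_filter.mp hi).2
          have hta : t * a i ≠ 0 := mul_ne_zero ht0 (ha i)
          have echi : ∀ u ∈ Fs, χ i u ^ k i * ψ (u * (t * a i))
              = (χ i ^ k i) u * ψ (u * (t * a i)) := fun u _ => by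
            rw [MulChar.pow_apply' _ hki]
          rw [hΦ]
          dsimp only
          rw [Finset.sum_congr rfl echi, hFs,
            sum_chi_psi_eq hψ (hχpow_ne i (k i) hki (hklt i)) hta, map_mul, hτ]
          ring
        rw [Finset.prod_congr rfl hper, Finset.prod_mul_distrib, hΘ, hC,
          mulChar_prod_apply _ _ ht0]
      rw [e1, e2]
      ring
    have hWk : W k = ((-1:ℂ) ^ c * C) * ∑ t ∈ Fs, Θ t * ψ (t * (-b)) := by
      rw [hW]
      dsimp only
      have e0 : ∀ t ∈ Fs, ψ (t * (-b)) * ∏ i, Φ i (k i) t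
          = ((-1:ℂ) ^ c * C) * (Θ t * ψ (t * (-b))) := by
        intro t ht
        rw [hprod t ht]
        ring
      rw [Finset.sum_congr rfl e0, ← Finset.mul_sum]
    have habsC : ‖C‖ = sq ^ (univ.filter (fun i : Fin n => k i ≠ 0)).card := by
      rw [hC, norm_prod]
      have hper : ∀ i ∈ univ.filter (fun i : Fin n => k i ≠ 0),
          ‖(χ i ^ k i)⁻¹ (a i) * τ i‖ = sq := by
        intro i hi
        have hki : k i ≠ 0 := (mem_filter.mp hi).2
        rw [norm_mul, mulChar_abs_apply _ (ha i), one_mul, hτ]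
        exact abs_gaussSum (hχpow_ne i (k i) hki (hklt i)) hψ
      rw [Finset.prod_congr rfl hper, Finset.prod_const]
    have habsSum : ‖∑ t ∈ Fs, Θ t * ψ (t * (-b))‖ ≤ sq := by
      rw [hFs]
      exact abs_sum_chi_psi_le hψ Θ (neg_ne_zero.mpr hb)
    calc ‖W k‖ = ‖C‖ * ‖∑ t ∈ Fs, Θ t * ψ (t * (-b))‖ := by
          rw [hWk, norm_mul, norm_mul, norm_pow]
          simp
      _ ≤ ‖C‖ * sq := by
          exact mul_le_mul_of_nonneg_left habsSum (norm_nonneg _)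
      _ = sq ^ ((univ.filter fun i => k i ≠ 0).card + 1) := by
          rw [habsC, pow_succ]
  -- total bound
  have total : ‖(q:ℂ) * Nstar - (((q:ℂ) - 1) ^ n - (-1) ^ n)‖
      ≤ ∑ k ∈ K.erase 0, sq ^ ((univ.filter fun i => k i ≠ 0).card + 1) := by
    rw [key]
    exact (norm_sum_le _ _).trans (Finset.sum_le_sum bound)
  -- counting fibers
  have hcount : ∀ S : Finset (Fin n), S.Nonempty →
      ((K.erase 0).filter (fun k : Fin n → ℕ => univ.filter (fun i => k i ≠ 0) = S)).card
        = ∏ i ∈ S, (g i - 1) := by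
    intro S hSne
    have e0 : (K.erase 0).filter (fun k : Fin n → ℕ => univ.filter (fun i => k i ≠ 0) = S)
        = K.filter (fun k : Fin n → ℕ => univ.filter (fun i => k i ≠ 0) = S) := by
      ext k
      simp only [Finset.mem_filter, Finset.mem_erase]
      constructor
      · tauto
      · rintro ⟨hkK, hsupp⟩
        refine ⟨⟨?_, hkK⟩, hsupp⟩
        rintro rfl
        obtain ⟨i, hi⟩ := hSne
        rw [← hsupp, mem_filter] at hi
        exact hi.2 rfl
    have e1 : K.filter (fun k : Fin n → ℕ => univ.filter (fun i => k i ≠ 0) = S)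
        = Fintype.piFinset (fun i => if i ∈ S then Finset.Ico 1 (g i) else {0}) := by
      ext k
      simp only [Finset.mem_filter, hK, Fintype.mem_piFinset, Finset.mem_range]
      constructor
      · rintro ⟨hkr, hsupp⟩
        have hiff : ∀ i, i ∈ S ↔ k i ≠ 0 := fun i => by
          rw [← hsupp, mem_filter]
          simp
        intro i
        by_cases hi : i ∈ S
        · rw [if_pos hi, Finset.mem_Ico]
          exact ⟨Nat.one_le_iff_ne_zero.mpr ((hiff i).mp hi), hkr i⟩
        · rw [if_neg hi, Finset.mem_singleton]
          by_contra h
          exact hi ((hiff i).mpr h)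
      · intro hall
        constructor
        · intro i
          have hi := hall i
          by_cases h : i ∈ S
          · rw [if_pos h, Finset.mem_Ico] at hi
            exact hi.2
          · rw [if_neg h, Finset.mem_singleton] at hi
            rw [hi]
            exact hg0 i
        · ext i
          simp only [Finset.mem_filter, Finset.mem_univ, true_and]
          have hi := hall i
          by_cases h : i ∈ S
          · rw [if_pos h, Finset.mem_Ico] at hi
            exact ⟨fun _ => h, fun _ => Nat.one_le_iff_ne_zero.mp hi.1⟩
          · rw [if_neg h, Finset.mem_singleton] at hi
            exact ⟨fun hh => absurd hi hh, fun hh => absurd hh h⟩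
    rw [e0, e1, Fintype.card_piFinset]
    have e2 : ∀ i : Fin n, (if i ∈ S then Finset.Ico 1 (g i) else {0}).card
        = if i ∈ S then g i - 1 else 1 := by
      intro i
      split_ifs
      · rw [Nat.card_Ico]
      · rw [Finset.card_singleton]
    rw [Finset.prod_congr rfl (fun i _ => e2 i), Finset.prod_ite_mem, Finset.univ_inter]
  have hfiber_empty :
      ((K.erase 0).filter (fun k : Fin n → ℕ => univ.filter (fun i => k i ≠ 0) = ∅)).card
        = 0 := by
    rw [Finset.card_eq_zero, Finset.eq_empty_iff_forall_notMem]
    intro k hk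
    rw [Finset.mem_filter, Finset.mem_erase] at hk
    obtain ⟨⟨hk0, -⟩, hsupp⟩ := hk
    apply hk0
    funext i
    by_contra hki
    have : i ∈ univ.filter (fun i => k i ≠ 0) := mem_filter.mpr ⟨mem_univ i, hki⟩
    rw [hsupp] at this
    exact absurd this (Finset.notMem_empty i)
  -- regroup
  have regroup : ∑ k ∈ K.erase 0, sq ^ ((univ.filter fun i => k i ≠ 0).card + 1)
      = ∑ S ∈ (univ : Finset (Fin n)).powerset,
          (((K.erase 0).filter (fun k : Fin n → ℕ =>
              univ.filter (fun i => k i ≠ 0) = S)).card : ℝ) * sq ^ (S.card + 1) := by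
    have hfib := Finset.sum_fiberwise_of_maps_to
      (s := K.erase 0) (t := (univ : Finset (Fin n)).powerset)
      (g := fun k : Fin n → ℕ => univ.filter (fun i => k i ≠ 0))
      (fun k _ => Finset.mem_powerset.mpr (Finset.filter_subset _ _))
      (fun k : Fin n → ℕ => sq ^ ((univ.filter fun i => k i ≠ 0).card + 1))
    rw [← hfib]
    refine Finset.sum_congr rfl fun S hS => ?_
    have e0 : ∀ k ∈ (K.erase 0).filter (fun k : Fin n → ℕ =>
        univ.filter (fun i => k i ≠ 0) = S),
        sq ^ ((univ.filter fun i => k i ≠ 0).card + 1) = sq ^ (S.card + 1) := by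
      intro k hk
      rw [(Finset.mem_filter.mp hk).2]
    rw [Finset.sum_congr rfl e0, Finset.sum_const, nsmul_eq_mul]
  -- final computation
  set R : ℝ := ∑ e ∈ Finset.range n,
      ∑ S ∈ Finset.powersetCard (n - e) (Finset.univ : Finset (Fin n)),
        (∏ j ∈ S, ((Nat.gcd (d j) N : ℝ) - 1)) * sq ^ (n - e - 1) with hR
  have hfinal : ∑ k ∈ K.erase 0, sq ^ ((univ.filter fun i => k i ≠ 0).card + 1)
      = (q:ℝ) * R := by
    rw [regroup]
    have hps : ((univ : Finset (Fin n)).powerset).sum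
        (fun S => (((K.erase 0).filter (fun k : Fin n → ℕ =>
            univ.filter (fun i => k i ≠ 0) = S)).card : ℝ) * sq ^ (S.card + 1))
        = ∑ j ∈ range (n + 1), ∑ S ∈ powersetCard j (univ : Finset (Fin n)),
            (((K.erase 0).filter (fun k : Fin n → ℕ =>
                univ.filter (fun i => k i ≠ 0) = S)).card : ℝ) * sq ^ (S.card + 1) := by
      rw [Finset.sum_powerset, Finset.card_univ, Fintype.card_fin]
    rw [hps, Finset.sum_range_succ']
    have hzero : ∑ S ∈ powersetCard 0 (univ : Finset (Fin n)),
        (((K.erase 0).filter (fun k : Fin n → ℕ =>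
            univ.filter (fun i => k i ≠ 0) = S)).card : ℝ) * sq ^ (S.card + 1) = 0 := by
      rw [Finset.powersetCard_zero, Finset.sum_singleton, hfiber_empty]
      simp
    rw [hzero, add_zero, hR, Finset.mul_sum]
    have hrefl := Finset.sum_range_reflect
      (fun e => (q:ℝ) * ∑ S ∈ powersetCard (n - e) (univ : Finset (Fin n)),
        (∏ j ∈ S, ((Nat.gcd (d j) N : ℝ) - 1)) * sq ^ (n - e - 1)) n
    rw [← hrefl]
    beta_reduce
    refine Finset.sum_congr rfl fun j hj => ?_
    have hjn : j < n := mem_range.mp hj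
    have hidx : n - (n - 1 - j) = j + 1 := by
      rw [Nat.sub_sub, Nat.add_comm, Nat.sub_sub_self hjn]
    rw [hidx]
    rw [Finset.mul_sum]
    refine Finset.sum_congr rfl fun S hS => ?_
    have hScard : S.card = j + 1 := (Finset.mem_powersetCard.mp hS).2
    have hSne : S.Nonempty := Finset.card_pos.mp (by rw [hScard]; exact Nat.succ_pos j)
    rw [hcount S hSne, hScard]
    have hcast : ((∏ i ∈ S, (g i - 1) : ℕ) : ℝ) = ∏ i ∈ S, ((g i : ℝ) - 1) := by
      rw [Nat.cast_prod]
      refine Finset.prod_congr rfl fun i _ => ?_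
      rw [Nat.cast_sub (hg1 i), Nat.cast_one]
    rw [hcast]
    have hpow : sq ^ (j + 1 + 1) = (q:ℝ) * sq ^ (j + 1 - 1) := by
      rw [← hsqsq, Nat.add_sub_cancel]
      ring
    rw [hpow]
    have hgcd : ∀ i ∈ S, ((Nat.gcd (d i) N : ℝ) - 1) = ((g i : ℝ) - 1) := fun i _ => by
      rw [hgdef]
    rw [Finset.prod_congr rfl hgcd]
    ring
  -- conclude
  refine (mul_le_mul_iff_right₀ hq0).mp ?_
  have h1 : (q:ℝ) * |((Nstar:ℕ):ℝ) - 1 / (q:ℝ) * (((q:ℝ) - 1) ^ n - (-1:ℝ) ^ n)|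
      = ‖(q:ℂ) * Nstar - (((q:ℂ) - 1) ^ n - (-1) ^ n)‖ := by
    have hcast : ((q:ℂ) * Nstar - (((q:ℂ) - 1) ^ n - (-1) ^ n))
        = (((q:ℝ) * Nstar - (((q:ℝ) - 1) ^ n - (-1:ℝ) ^ n) : ℝ) : ℂ) := by
      push_cast
      ring
    rw [hcast, Complex.norm_real, Real.norm_eq_abs]
    rw [show (q:ℝ) * Nstar - (((q:ℝ) - 1) ^ n - (-1:ℝ) ^ n)
        = (q:ℝ) * (((Nstar:ℕ):ℝ) - 1 / (q:ℝ) * (((q:ℝ) - 1) ^ n - (-1:ℝ) ^ n)) by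
      field_simp]
    rw [abs_mul, abs_of_pos hq0]
  rw [h1]
  calc ‖(q:ℂ) * Nstar - (((q:ℂ) - 1) ^ n - (-1) ^ n)‖
      ≤ ∑ k ∈ K.erase 0, sq ^ ((univ.filter fun i => k i ≠ 0).card + 1) := total
    _ = (q:ℝ) * R := hfinal



lemma part2calc {F : Type*} [Field F] [Fintype F] {n : ℕ} (d : Fin n → ℕ)
    (m : ℕ) (hm : ∀ i, d i = m) (hmd : m ∣ Fintype.card F - 1) :
    ∑ e ∈ Finset.range n,
        ∑ S ∈ Finset.powersetCard (n - e) (Finset.univ : Finset (Fin n)),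
          (∏ j ∈ S, ((Nat.gcd (d j) (Fintype.card F - 1) : ℝ) - 1)) *
            Real.sqrt (Fintype.card F) ^ (n - e - 1)
      < (1 + ((m : ℝ) - 1) * Real.sqrt (Fintype.card F)) ^ n /
          Real.sqrt (Fintype.card F) := by
  have hq : 1 < Fintype.card F := Fintype.one_lt_card
  have hq0 : (0:ℝ) < Fintype.card F := by exact_mod_cast Nat.zero_lt_of_lt hq
  set sq := Real.sqrt (Fintype.card F) with hsq
  have hsq0 : 0 < sq := Real.sqrt_pos.mpr hq0
  have hm0 : m ≠ 0 := by
    rintro rfl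
    rw [Nat.zero_dvd] at hmd
    omega
  have hgcd : ∀ j : Fin n, Nat.gcd (d j) (Fintype.card F - 1) = m := fun j => by
    rw [hm j]; exact Nat.gcd_eq_left hmd
  set z : ℝ := ((m : ℝ) - 1) * sq with hz
  have hz0 : 0 ≤ z := by
    have : (1:ℝ) ≤ m := by exact_mod_cast Nat.one_le_iff_ne_zero.mpr hm0
    have h1 : (0:ℝ) ≤ (m:ℝ) - 1 := by linarith
    exact mul_nonneg h1 hsq0.le
  rw [lt_div_iff₀ hsq0]
  -- LHS * sq
  have e1 : (∑ e ∈ Finset.range n,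
        ∑ S ∈ Finset.powersetCard (n - e) (Finset.univ : Finset (Fin n)),
          (∏ j ∈ S, ((Nat.gcd (d j) (Fintype.card F - 1) : ℝ) - 1)) * sq ^ (n - e - 1)) * sq
      = ∑ e ∈ Finset.range n, (n.choose (n - e) : ℝ) * z ^ (n - e) := by
    rw [Finset.sum_mul]
    refine Finset.sum_congr rfl fun e he => ?_
    have h1 : 1 ≤ n - e := by
      have := Finset.mem_range.mp he
      omega
    have e2 : ∀ S ∈ Finset.powersetCard (n - e) (Finset.univ : Finset (Fin n)),
        (∏ j ∈ S, ((Nat.gcd (d j) (Fintype.card F - 1) : ℝ) - 1)) * sq ^ (n - e - 1)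
          = ((m:ℝ) - 1) ^ (n - e) * sq ^ (n - e - 1) := by
      intro S hS
      have hcard : S.card = n - e := (Finset.mem_powersetCard.mp hS).2
      have : ∀ j ∈ S, ((Nat.gcd (d j) (Fintype.card F - 1) : ℝ) - 1) = ((m:ℝ) - 1) :=
        fun j _ => by rw [hgcd j]
      rw [Finset.prod_congr rfl this, Finset.prod_const, hcard]
    rw [Finset.sum_congr rfl e2, Finset.sum_const, Finset.card_powersetCard,
      Finset.card_univ, Fintype.card_fin, nsmul_eq_mul]
    have hpow : sq ^ (n - e - 1) * sq = sq ^ (n - e) := by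
      rw [← pow_succ, Nat.sub_add_cancel h1]
    rw [hz, mul_pow, ← hpow]
    ring
  rw [e1]
  -- binomial
  have e3 : (1 + z) ^ n = ∑ j ∈ Finset.range (n + 1), z ^ j * (n.choose j : ℝ) := by
    rw [add_comm, add_pow]
    refine Finset.sum_congr rfl fun j _ => by rw [one_pow, mul_one]
  rw [e3, Finset.sum_range_succ']
  have e4 : ∑ e ∈ Finset.range n, (n.choose (n - e) : ℝ) * z ^ (n - e)
      = ∑ j ∈ Finset.range n, z ^ (j + 1) * (n.choose (j + 1) : ℝ) := by
    have hrefl := Finset.sum_range_reflect (fun e => (n.choose (n - e) : ℝ) * z ^ (n - e)) n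
    rw [← hrefl]
    refine Finset.sum_congr rfl fun j hj => ?_
    have hjn : j < n := Finset.mem_range.mp hj
    have hidx : n - (n - 1 - j) = j + 1 := by omega
    beta_reduce
    rw [hidx]
    ring
  rw [e4]
  simp only [pow_zero, Nat.choose_zero_right, Nat.cast_one, one_mul]
  linarith

end DiagAux

theorem diagonal_equation_estimate {F : Type*} [Field F] [Fintype F] {n : ℕ}
    (d : Fin n → ℕ) (hd : ∀ i, 0 < d i) (a : Fin n → F) (ha : ∀ i, a i ≠ 0)
    (b : F) (hb : b ≠ 0) :
    (|(((Finset.univ.filter fun x : Fin n → F =>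
              (∀ i, x i ≠ 0) ∧ ∑ i, a i * x i ^ d i = b).card : ℝ))
          - (1 / (Fintype.card F : ℝ)) *
              (((Fintype.card F : ℝ) - 1) ^ n - (-1 : ℝ) ^ n)|
        ≤ ∑ e ∈ Finset.range n,
            ∑ S ∈ Finset.powersetCard (n - e) (Finset.univ : Finset (Fin n)),
              (∏ j ∈ S, ((Nat.gcd (d j) (Fintype.card F - 1) : ℝ) - 1)) *
                Real.sqrt (Fintype.card F) ^ (n - e - 1)) ∧
      ∀ m : ℕ, (∀ i, d i = m) → m ∣ Fintype.card F - 1 →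
        |(((Finset.univ.filter fun x : Fin n → F =>
                (∀ i, x i ≠ 0) ∧ ∑ i, a i * x i ^ d i = b).card : ℝ))
            - (1 / (Fintype.card F : ℝ)) *
                (((Fintype.card F : ℝ) - 1) ^ n - (-1 : ℝ) ^ n)|
          < (1 + ((m : ℝ) - 1) * Real.sqrt (Fintype.card F)) ^ n /
              Real.sqrt (Fintype.card F) := by
  exact ⟨DiagAux.part1 d hd a ha b hb, fun m hm hmd =>
    lt_of_le_of_lt (DiagAux.part1 d hd a ha b hb) (DiagAux.part2calc d m hm hmd)⟩
end
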